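/- Let M ∈ ℝ^{n×n} be symmetric positive definite, let C := {y ∈ ℝⁿ : yᵀMy ≤ 1}, let P ∈ ℝ^{d×n} with P Pᵀ = I_d, let x ∈ C, and let g ∈ ℝⁿ with Pg ≠ 0. Set A := P M Pᵀ, b := P M x, and δ := 1 − xᵀMx + bᵀA⁻¹b, and assume δ > 0. Let s be a minimizer of y ↦ ⟨g, y⟩ over the affine section C ∩ (x + range(Pᵀ)), and set d := s − x and gap := ⟨g, x − s⟩. Then the minimizer is s = x + Pᵀz* with z* = −A⁻¹b − √δ · A⁻¹Pg / √((Pg)ᵀA⁻¹(Pg)), and gap ≥ (λ_min(A)/(2·√(δ·λ_max(A)))) · ‖Pg‖ · ‖d‖². -/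

import Mathlib

open Matrix

/-- Euclidean norm on `m → ℝ`. -/
noncomputable def norR {m : Type*} [Fintype m] (x : m → ℝ) : ℝ :=
  Real.sqrt (∑ i, x i * x i)

/-- Smallest Rayleigh quotient (for symmetric matrices, the smallest eigenvalue). -/
noncomputable def lamMin {k : ℕ} (A : Matrix (Fin k) (Fin k) ℝ) : ℝ :=
  ⨅ x : {x : Fin k → ℝ // ∑ i, x i * x i = 1}, (x : Fin k → ℝ) ⬝ᵥ A.mulVec x

/-- Largest Rayleigh quotient (for symmetric matrices, the largest eigenvalue). -/
noncomputable def lamMax {k : ℕ} (A : Matrix (Fin k) (Fin k) ℝ) : ℝ :=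
  ⨆ x : {x : Fin k → ℝ // ∑ i, x i * x i = 1}, (x : Fin k → ℝ) ⬝ᵥ A.mulVec x

namespace EllipsoidAux

lemma mv_dot {k m : ℕ} (B : Matrix (Fin k) (Fin m) ℝ) (u : Fin m → ℝ) (v : Fin k → ℝ) :
    B.mulVec u ⬝ᵥ v = u ⬝ᵥ Bᵀ.mulVec v := by
  rw [dotProduct_comm, dotProduct_mulVec, ← mulVec_transpose, dotProduct_comm]

lemma dot_mv_symm {k : ℕ} {A : Matrix (Fin k) (Fin k) ℝ} (hA : Aᵀ = A) (a b : Fin k → ℝ) :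
    a ⬝ᵥ A.mulVec b = b ⬝ᵥ A.mulVec a := by
  rw [dotProduct_mulVec, ← mulVec_transpose, hA, dotProduct_comm]

lemma dot_self_pos {k : ℕ} {v : Fin k → ℝ} (hv : v ≠ 0) : 0 < v ⬝ᵥ v := by
  have h1 : 0 ≤ v ⬝ᵥ v := Finset.sum_nonneg fun i _ => mul_self_nonneg (v i)
  rcases h1.lt_or_eq with h | h
  · exact h
  · exact absurd (dotProduct_self_eq_zero.mp h.symm) hv

/-- Cauchy–Schwarz for a PSD quadratic form. -/
lemma psd_cs {k : ℕ} {A : Matrix (Fin k) (Fin k) ℝ} (hA : A.PosSemidef)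
    (u v : Fin k → ℝ) :
    (u ⬝ᵥ A.mulVec v) ^ 2 ≤ (u ⬝ᵥ A.mulVec u) * (v ⬝ᵥ A.mulVec v) := by
  have hsym : Aᵀ = A := by
    rw [← conjTranspose_eq_transpose_of_trivial]; exact hA.1
  have key : ∀ t : ℝ, 0 ≤ (v ⬝ᵥ A.mulVec v) * (t * t) + (2 * (u ⬝ᵥ A.mulVec v)) * t
      + u ⬝ᵥ A.mulVec u := by
    intro t
    have h0 := hA.dotProduct_mulVec_nonneg (u + t • v)
    rw [star_trivial] at h0
    have hexp : (u + t • v) ⬝ᵥ A.mulVec (u + t • v)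
        = (v ⬝ᵥ A.mulVec v) * (t * t) + (2 * (u ⬝ᵥ A.mulVec v)) * t + u ⬝ᵥ A.mulVec u := by
      have e1 : v ⬝ᵥ A.mulVec u = u ⬝ᵥ A.mulVec v := dot_mv_symm hsym v u
      simp only [mulVec_add, mulVec_smul, dotProduct_add, add_dotProduct,
        dotProduct_smul, smul_dotProduct, smul_eq_mul, e1]
      ring
    linarith [hexp ▸ h0]
  have hd := discrim_le_zero key
  rw [discrim] at hd
  nlinarith only [hd]

lemma rayleigh_bound {k : ℕ} (A : Matrix (Fin k) (Fin k) ℝ) (v : Fin k → ℝ)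
    (hv : ∑ i, v i * v i = 1) :
    |v ⬝ᵥ A.mulVec v| ≤ ∑ i, ∑ j, |A i j| := by
  have habs : ∀ i, |v i| ≤ 1 := by
    intro i
    have h1 : v i * v i ≤ 1 := by
      calc v i * v i ≤ ∑ j, v j * v j :=
            Finset.single_le_sum (fun j _ => mul_self_nonneg (v j)) (Finset.mem_univ i)
        _ = 1 := hv
    exact abs_le_one_iff_mul_self_le_one.mpr h1
  calc |v ⬝ᵥ A.mulVec v| = |∑ i, ∑ j, v i * (A i j * v j)| := by
        simp [dotProduct, Matrix.mulVec, Finset.mul_sum]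
    _ ≤ ∑ i, |∑ j, v i * (A i j * v j)| := Finset.abs_sum_le_sum_abs _ _
    _ ≤ ∑ i, ∑ j, |v i * (A i j * v j)| :=
        Finset.sum_le_sum fun i _ => Finset.abs_sum_le_sum_abs _ _
    _ ≤ ∑ i, ∑ j, |A i j| := by
        refine Finset.sum_le_sum fun i _ => Finset.sum_le_sum fun j _ => ?_
        rw [abs_mul, abs_mul]
        have h2 : |A i j| * |v j| ≤ |A i j| * 1 :=
          mul_le_mul_of_nonneg_left (habs j) (abs_nonneg _)
        have h3 := mul_le_mul (habs i) h2 (by positivity) zero_le_one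
        simpa using h3

lemma rayleigh_bddAbove {k : ℕ} (A : Matrix (Fin k) (Fin k) ℝ) :
    BddAbove (Set.range fun x : {x : Fin k → ℝ // ∑ i, x i * x i = 1} =>
      (x : Fin k → ℝ) ⬝ᵥ A.mulVec x) := by
  refine ⟨∑ i, ∑ j, |A i j|, ?_⟩
  rintro y ⟨⟨v, hv⟩, rfl⟩
  exact (le_abs_self _).trans (rayleigh_bound A v hv)

lemma rayleigh_bddBelow {k : ℕ} (A : Matrix (Fin k) (Fin k) ℝ) :
    BddBelow (Set.range fun x : {x : Fin k → ℝ // ∑ i, x i * x i = 1} =>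
      (x : Fin k → ℝ) ⬝ᵥ A.mulVec x) := by
  refine ⟨-∑ i, ∑ j, |A i j|, ?_⟩
  rintro y ⟨⟨v, hv⟩, rfl⟩
  have := (abs_le.mp (rayleigh_bound A v hv)).1
  simpa using this

lemma unit_of_ne_zero {k : ℕ} {v : Fin k → ℝ} (hv : v ≠ 0) :
    ∑ i, ((Real.sqrt (v ⬝ᵥ v))⁻¹ • v) i * ((Real.sqrt (v ⬝ᵥ v))⁻¹ • v) i = 1 := by
  have hvv : 0 < v ⬝ᵥ v := dot_self_pos hv
  have hnv : 0 < Real.sqrt (v ⬝ᵥ v) := Real.sqrt_pos.mpr hvv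
  have hsq : Real.sqrt (v ⬝ᵥ v) * Real.sqrt (v ⬝ᵥ v) = v ⬝ᵥ v := Real.mul_self_sqrt hvv.le
  have h1 : ∑ i, ((Real.sqrt (v ⬝ᵥ v))⁻¹ • v) i * ((Real.sqrt (v ⬝ᵥ v))⁻¹ • v) i
      = (Real.sqrt (v ⬝ᵥ v))⁻¹ * (Real.sqrt (v ⬝ᵥ v))⁻¹ * ∑ i, v i * v i := by
    rw [Finset.mul_sum]
    refine Finset.sum_congr rfl fun i _ => ?_
    simp [Pi.smul_apply, smul_eq_mul]; ring
  rw [h1]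
  have h2 : (∑ i, v i * v i) = v ⬝ᵥ v := rfl
  rw [h2]
  field_simp
  all_goals nlinarith [hsq]

lemma lamMin_mul_le {k : ℕ} [Nonempty (Fin k)] (A : Matrix (Fin k) (Fin k) ℝ)
    (v : Fin k → ℝ) :
    lamMin A * (v ⬝ᵥ v) ≤ v ⬝ᵥ A.mulVec v := by
  by_cases hv : v = 0
  · simp [hv]
  have hvv : 0 < v ⬝ᵥ v := dot_self_pos hv
  set nv := Real.sqrt (v ⬝ᵥ v) with hnv_def
  have hnv : 0 < nv := Real.sqrt_pos.mpr hvv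
  have hsq : nv * nv = v ⬝ᵥ v := Real.mul_self_sqrt hvv.le
  have hle : lamMin A ≤ (nv⁻¹ • v) ⬝ᵥ A.mulVec (nv⁻¹ • v) :=
    ciInf_le (rayleigh_bddBelow A) ⟨nv⁻¹ • v, unit_of_ne_zero hv⟩
  have hexp : (nv⁻¹ • v) ⬝ᵥ A.mulVec (nv⁻¹ • v) = nv⁻¹ * nv⁻¹ * (v ⬝ᵥ A.mulVec v) := by
    simp [mulVec_smul, smul_eq_mul]; ring
  rw [hexp] at hle
  have h3 := mul_le_mul_of_nonneg_left hle (mul_pos hnv hnv).le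
  have h4 : nv * nv * (nv⁻¹ * nv⁻¹ * (v ⬝ᵥ A.mulVec v)) = v ⬝ᵥ A.mulVec v := by
    field_simp
  have h5 : lamMin A * (v ⬝ᵥ v) = nv * nv * lamMin A := by rw [← hsq]; ring
  linarith only [h3, h4, h5]

lemma le_lamMax_mul {k : ℕ} [Nonempty (Fin k)] (A : Matrix (Fin k) (Fin k) ℝ)
    (v : Fin k → ℝ) :
    v ⬝ᵥ A.mulVec v ≤ lamMax A * (v ⬝ᵥ v) := by
  by_cases hv : v = 0
  · simp [hv]
  have hvv : 0 < v ⬝ᵥ v := dot_self_pos hv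
  set nv := Real.sqrt (v ⬝ᵥ v) with hnv_def
  have hnv : 0 < nv := Real.sqrt_pos.mpr hvv
  have hsq : nv * nv = v ⬝ᵥ v := Real.mul_self_sqrt hvv.le
  have hle : (nv⁻¹ • v) ⬝ᵥ A.mulVec (nv⁻¹ • v) ≤ lamMax A :=
    le_ciSup (rayleigh_bddAbove A) ⟨nv⁻¹ • v, unit_of_ne_zero hv⟩
  have hexp : (nv⁻¹ • v) ⬝ᵥ A.mulVec (nv⁻¹ • v) = nv⁻¹ * nv⁻¹ * (v ⬝ᵥ A.mulVec v) := by
    simp [mulVec_smul, smul_eq_mul]; ring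
  rw [hexp] at hle
  have h3 := mul_le_mul_of_nonneg_left hle (mul_pos hnv hnv).le
  have h4 : nv * nv * (nv⁻¹ * nv⁻¹ * (v ⬝ᵥ A.mulVec v)) = v ⬝ᵥ A.mulVec v := by
    field_simp
  have h5 : lamMax A * (v ⬝ᵥ v) = nv * nv * lamMax A := by rw [← hsq]; ring
  linarith only [h3, h4, h5]

lemma exists_unit {k : ℕ} [Nonempty (Fin k)] :
    ∃ v : Fin k → ℝ, ∑ i, v i * v i = 1 := by
  refine ⟨Pi.single (Classical.arbitrary (Fin k)) 1, ?_⟩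
  simp [Pi.single_apply]

lemma lamMin_nonneg {k : ℕ} [Nonempty (Fin k)] {A : Matrix (Fin k) (Fin k) ℝ}
    (hA : A.PosSemidef) : 0 ≤ lamMin A := by
  obtain ⟨v, hv⟩ := exists_unit (k := k)
  haveI : Nonempty {x : Fin k → ℝ // ∑ i, x i * x i = 1} := ⟨⟨v, hv⟩⟩
  refine le_ciInf fun x => ?_
  have := hA.dotProduct_mulVec_nonneg x.1
  rwa [star_trivial] at this

end EllipsoidAux

open EllipsoidAux

set_option maxHeartbeats 1000000 in
/-- Exact LMO on a random ellipsoidal section and the section curvature bound.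
For `M ≻ 0`, `C = {y : yᵀMy ≤ 1}`, `P Pᵀ = I_d`, `x ∈ C`, `Pg ≠ 0`,
`A = PMPᵀ`, `b = PMx`, `δ = 1 − xᵀMx + bᵀA⁻¹b > 0`: if `s` minimizes `⟨g,·⟩`
over the section `C ∩ (x + range Pᵀ)`, then
`s = x + Pᵀz*` with `z* = −A⁻¹b − (√δ/√((Pg)ᵀA⁻¹Pg)) A⁻¹Pg`, and
`gap = ⟨g, x − s⟩ ≥ (λ_min(A)/(2√(δ λ_max(A)))) ‖Pg‖ ‖s − x‖²`. -/
theorem ellipsoid_section_lmo {n d : ℕ} (M : Matrix (Fin n) (Fin n) ℝ)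
    (hM : M.PosDef) (P : Matrix (Fin d) (Fin n) ℝ) (hP : P * Pᵀ = 1)
    (x : Fin n → ℝ) (hx : x ⬝ᵥ M.mulVec x ≤ 1)
    (g : Fin n → ℝ) (hPg : P.mulVec g ≠ 0)
    (hδ : 0 < 1 - x ⬝ᵥ M.mulVec x +
      (P.mulVec (M.mulVec x)) ⬝ᵥ (P * M * Pᵀ)⁻¹.mulVec (P.mulVec (M.mulVec x)))
    (s : Fin n → ℝ)
    (hsC : s ⬝ᵥ M.mulVec s ≤ 1) (hsU : ∃ z : Fin d → ℝ, s = x + Pᵀ.mulVec z)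
    (hmin : ∀ y : Fin n → ℝ, y ⬝ᵥ M.mulVec y ≤ 1 →
      (∃ z : Fin d → ℝ, y = x + Pᵀ.mulVec z) → g ⬝ᵥ s ≤ g ⬝ᵥ y) :
    s = x + Pᵀ.mulVec
        (-(P * M * Pᵀ)⁻¹.mulVec (P.mulVec (M.mulVec x)) -
          (Real.sqrt (1 - x ⬝ᵥ M.mulVec x +
              (P.mulVec (M.mulVec x)) ⬝ᵥ (P * M * Pᵀ)⁻¹.mulVec (P.mulVec (M.mulVec x))) /
            Real.sqrt ((P.mulVec g) ⬝ᵥ (P * M * Pᵀ)⁻¹.mulVec (P.mulVec g))) •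
          (P * M * Pᵀ)⁻¹.mulVec (P.mulVec g)) ∧
      lamMin (P * M * Pᵀ) /
          (2 * Real.sqrt ((1 - x ⬝ᵥ M.mulVec x +
              (P.mulVec (M.mulVec x)) ⬝ᵥ (P * M * Pᵀ)⁻¹.mulVec (P.mulVec (M.mulVec x))) *
            lamMax (P * M * Pᵀ))) *
          norR (P.mulVec g) * norR (s - x) ^ 2 ≤
        g ⬝ᵥ (x - s) := by
  classical
  obtain ⟨z, hz⟩ := hsU
  -- nonemptiness of `Fin d`
  have hdpos : 0 < d := by
    rcases Nat.eq_zero_or_pos d with h | h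
    · exfalso; apply hPg; subst h; funext i; exact i.elim0
    · exact h
  haveI : Nonempty (Fin d) := ⟨⟨0, hdpos⟩⟩
  set A : Matrix (Fin d) (Fin d) ℝ := P * M * Pᵀ with hA_def
  set q : Fin d → ℝ := P.mulVec g with hq_def
  set b : Fin d → ℝ := P.mulVec (M.mulVec x) with hb_def
  set c : Fin d → ℝ := A⁻¹.mulVec b with hc_def
  set r : Fin d → ℝ := A⁻¹.mulVec q with hr_def
  set γ : ℝ := q ⬝ᵥ r with hγ_def
  set δ : ℝ := 1 - x ⬝ᵥ M.mulVec x + b ⬝ᵥ c with hδ_def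
  set t : ℝ := Real.sqrt δ / Real.sqrt γ with ht_def
  set zs : Fin d → ℝ := -c - t • r with hzs_def
  clear_value A q b c r γ δ t zs
  -- basic matrix facts
  have hMsym : Mᵀ = M := by
    rw [← conjTranspose_eq_transpose_of_trivial]; exact hM.1
  have hAsym : Aᵀ = A := by
    rw [hA_def, transpose_mul, transpose_mul, transpose_transpose, hMsym, Matrix.mul_assoc]
  have hPMP : ∀ v w : Fin d → ℝ, v ⬝ᵥ A.mulVec w
      = (Pᵀ.mulVec v) ⬝ᵥ M.mulVec (Pᵀ.mulVec w) := by
    intro v w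
    rw [hA_def, ← mulVec_mulVec, ← mulVec_mulVec, dotProduct_comm, mv_dot P, dotProduct_comm]
  have hApd : A.PosDef := by
    apply Matrix.PosDef.of_dotProduct_mulVec_pos
    · have h0 : Aᴴ = A := by rw [conjTranspose_eq_transpose_of_trivial]; exact hAsym
      exact h0
    · intro v hv
      rw [star_trivial]
      have hPv : Pᵀ.mulVec v ≠ 0 := by
        intro h
        apply hv
        have h2 := congrArg P.mulVec h
        rwa [mulVec_mulVec, hP, one_mulVec, mulVec_zero] at h2
      have h3 := hM.dotProduct_mulVec_pos hPv
      rw [star_trivial] at h3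
      rw [hPMP v v]; exact h3
  have hdet : IsUnit A.det := (Matrix.isUnit_iff_isUnit_det A).mp hApd.isUnit
  have hAAi : A * A⁻¹ = 1 := mul_nonsing_inv A hdet
  have hAipd : A⁻¹.PosDef := hApd.inv
  have hAisym : A⁻¹ᵀ = A⁻¹ := by rw [transpose_nonsing_inv, hAsym]
  have hAc : A.mulVec c = b := by rw [hc_def, mulVec_mulVec, hAAi, one_mulVec]
  have hAr : A.mulVec r = q := by rw [hr_def, mulVec_mulVec, hAAi, one_mulVec]
  -- positivity
  have hγpos : 0 < γ := by
    have := hAipd.dotProduct_mulVec_pos hPg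
    rwa [star_trivial, ← hr_def, ← hγ_def] at this
  have hδpos : 0 < δ := hδ
  have hsδ : 0 < Real.sqrt δ := Real.sqrt_pos.mpr hδpos
  have hsγ : 0 < Real.sqrt γ := Real.sqrt_pos.mpr hγpos
  have hsδ2 : Real.sqrt δ * Real.sqrt δ = δ := Real.mul_self_sqrt hδpos.le
  have hsγ2 : Real.sqrt γ * Real.sqrt γ = γ := Real.mul_self_sqrt hγpos.le
  have htpos : 0 < t := by rw [ht_def]; exact div_pos hsδ hsγ
  have ht2γ : t * t * γ = δ := by
    have h0 : t * t * γ = Real.sqrt δ * Real.sqrt δ * γ / (Real.sqrt γ * Real.sqrt γ) := by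
      rw [ht_def]; ring
    rw [h0, hsδ2, hsγ2, mul_div_assoc, div_self hγpos.ne', mul_one]
  -- dot product identities
  have hsymA := dot_mv_symm hAsym
  have hrb : r ⬝ᵥ b = q ⬝ᵥ c := by
    rw [hr_def, hc_def, mv_dot, hAisym]
  have hbr : b ⬝ᵥ r = q ⬝ᵥ c := by rw [dotProduct_comm]; exact hrb
  have hcq : c ⬝ᵥ q = q ⬝ᵥ c := dotProduct_comm c q
  have hrq : r ⬝ᵥ q = γ := by rw [hγ_def, dotProduct_comm]
  have hcb : c ⬝ᵥ b = b ⬝ᵥ c := dotProduct_comm c b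
  -- section quadratic form
  have hlinsec : ∀ w : Fin d → ℝ, g ⬝ᵥ (x + Pᵀ.mulVec w) = g ⬝ᵥ x + q ⬝ᵥ w := by
    intro w
    rw [dotProduct_add]
    congr 1
    rw [dotProduct_mulVec, vecMul_transpose, ← hq_def]
  have hsec : ∀ w : Fin d → ℝ, (x + Pᵀ.mulVec w) ⬝ᵥ M.mulVec (x + Pᵀ.mulVec w)
      = x ⬝ᵥ M.mulVec x + 2 * (b ⬝ᵥ w) + w ⬝ᵥ A.mulVec w := by
    intro w
    have h2 : (Pᵀ.mulVec w) ⬝ᵥ M.mulVec x = w ⬝ᵥ b := by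
      rw [mv_dot, transpose_transpose, hb_def]
    have h1 : x ⬝ᵥ M.mulVec (Pᵀ.mulVec w) = w ⬝ᵥ b := by
      rw [dot_mv_symm hMsym x (Pᵀ.mulVec w), h2]
    have h3 : (Pᵀ.mulVec w) ⬝ᵥ M.mulVec (Pᵀ.mulVec w) = w ⬝ᵥ A.mulVec w := (hPMP w w).symm
    rw [mulVec_add, dotProduct_add, add_dotProduct, add_dotProduct, h1, h2, h3,
      dotProduct_comm w b]
    ring
  -- value of the quadratic at zs
  have hAzs : A.mulVec zs = -b - t • q := by
    simp only [hzs_def, sub_eq_add_neg, mulVec_add, mulVec_neg, mulVec_smul, hAc, hAr]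
  have hqzs : q ⬝ᵥ zs = -(q ⬝ᵥ c) - t * γ := by
    simp only [hzs_def, sub_eq_add_neg, dotProduct_add, dotProduct_neg, dotProduct_smul,
      smul_eq_mul, ← hγ_def]
    all_goals ring
  have hbzs : b ⬝ᵥ zs = -(b ⬝ᵥ c) - t * (q ⬝ᵥ c) := by
    simp only [hzs_def, sub_eq_add_neg, dotProduct_add, dotProduct_neg, dotProduct_smul,
      smul_eq_mul, hbr]
    all_goals ring
  have hzsA : zs ⬝ᵥ A.mulVec zs = b ⬝ᵥ c + 2 * t * (q ⬝ᵥ c) + δ := by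
    rw [hAzs]
    simp only [hzs_def, sub_eq_add_neg, dotProduct_add, add_dotProduct, neg_dotProduct,
      dotProduct_neg, dotProduct_smul, smul_dotProduct, smul_eq_mul, hcb, hcq, hrb, hrq]
    linear_combination ht2γ
  -- the candidate point is feasible (in fact on the boundary)
  have hys_eq : (x + Pᵀ.mulVec zs) ⬝ᵥ M.mulVec (x + Pᵀ.mulVec zs) = 1 := by
    rw [hsec zs, hbzs, hzsA, hδ_def]
    ring
  have hmin' := hmin (x + Pᵀ.mulVec zs) (le_of_eq hys_eq) ⟨zs, rfl⟩
  have hqz_le : q ⬝ᵥ z ≤ q ⬝ᵥ zs := by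
    rw [hz, hlinsec z, hlinsec zs] at hmin'
    exact (add_le_add_iff_left _).mp hmin'
  -- feasibility of s
  have hfz : x ⬝ᵥ M.mulVec x + 2 * (b ⬝ᵥ z) + z ⬝ᵥ A.mulVec z ≤ 1 := by
    rw [← hsec z, ← hz]; exact hsC
  -- the quadratic gap is nonpositive, forcing z = zs
  have hzb : z ⬝ᵥ b = b ⬝ᵥ z := dotProduct_comm _ _
  have hzq : z ⬝ᵥ q = q ⬝ᵥ z := dotProduct_comm _ _
  have hzsb : zs ⬝ᵥ b = b ⬝ᵥ zs := dotProduct_comm _ _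
  have hzsq : zs ⬝ᵥ q = q ⬝ᵥ zs := dotProduct_comm _ _
  have hD : (z - zs) ⬝ᵥ A.mulVec (z - zs) ≤ 0 := by
    have h4 : zs ⬝ᵥ A.mulVec z = z ⬝ᵥ (-b - t • q) := by rw [hsymA zs z, hAzs]
    have hexp : (z - zs) ⬝ᵥ A.mulVec (z - zs)
        = z ⬝ᵥ A.mulVec z + 2 * (b ⬝ᵥ z) + 2 * t * (q ⬝ᵥ z) + b ⬝ᵥ c + 2 * t * (q ⬝ᵥ c) + δ := by
      rw [mulVec_sub, dotProduct_sub, hAzs, sub_dotProduct, h4, sub_dotProduct]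
      simp only [sub_eq_add_neg, dotProduct_add, dotProduct_neg, dotProduct_smul, smul_eq_mul,
        hzb, hzq, hzsb, hzsq, hbzs, hqzs]
      all_goals linear_combination ht2γ
    have h5 : t * (q ⬝ᵥ z) ≤ t * (-(q ⬝ᵥ c) - t * γ) := by
      rw [← hqzs]; exact mul_le_mul_of_nonneg_left hqz_le htpos.le
    rw [hexp]
    linarith only [hfz, h5, ht2γ, hδ_def]
  have hz_eq : z = zs := by
    by_contra hne
    have h7 := hApd.dotProduct_mulVec_pos (sub_ne_zero.mpr hne)
    rw [star_trivial] at h7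
    exact (not_le.mpr h7) hD
  have hs_eq : s = x + Pᵀ.mulVec zs := by rw [hz, hz_eq]
  refine ⟨hs_eq, ?_⟩
  -- Part 2 : the gap bound
  have hgap : g ⬝ᵥ (x - s) = q ⬝ᵥ c + Real.sqrt δ * Real.sqrt γ := by
    rw [hs_eq, show x - (x + Pᵀ.mulVec zs) = Pᵀ.mulVec (-zs) by rw [mulVec_neg]; abel]
    rw [dotProduct_mulVec, vecMul_transpose, ← hq_def, dotProduct_neg, hqzs]
    have h9 : t * γ = Real.sqrt δ * Real.sqrt γ := by
      rw [ht_def, div_mul_eq_mul_div, div_eq_iff hsγ.ne', mul_assoc, hsγ2]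
    rw [← h9]; ring
  have hNu : 0 ≤ zs ⬝ᵥ zs := Finset.sum_nonneg fun i _ => mul_self_nonneg _
  have hnormd : norR (s - x) ^ 2 = zs ⬝ᵥ zs := by
    rw [hs_eq, show x + Pᵀ.mulVec zs - x = Pᵀ.mulVec zs from by abel]
    have h11 : norR (Pᵀ.mulVec zs) ^ 2 = (Pᵀ.mulVec zs) ⬝ᵥ (Pᵀ.mulVec zs) := by
      rw [norR, Real.sq_sqrt (Finset.sum_nonneg fun i _ => mul_self_nonneg _)]
      rfl
    rw [h11, mv_dot, transpose_transpose, mulVec_mulVec, hP, one_mulVec]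
  have hqq_pos : 0 < q ⬝ᵥ q := dot_self_pos hPg
  have hlmax_pos : 0 < lamMax A := by
    have h12 := le_lamMax_mul A q
    have h13 : 0 < q ⬝ᵥ A.mulVec q := by
      have := hApd.dotProduct_mulVec_pos hPg; rwa [star_trivial] at this
    have h14 : 0 < lamMax A * (q ⬝ᵥ q) := lt_of_lt_of_le h13 h12
    rcases mul_pos_iff.mp h14 with ⟨h, _⟩ | ⟨_, h⟩
    · exact h
    · exact absurd hqq_pos (not_lt.mpr h.le)
  have hlmin_nonneg : 0 ≤ lamMin A := lamMin_nonneg hApd.posSemidef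
  have hqq_le : q ⬝ᵥ q ≤ lamMax A * γ := by
    have hcs := psd_cs hApd.posSemidef r q
    have e1 : r ⬝ᵥ A.mulVec q = q ⬝ᵥ q := by rw [hsymA r q, hAr]
    have e2 : r ⬝ᵥ A.mulVec r = γ := by rw [hAr]; exact hrq
    have e3 : q ⬝ᵥ A.mulVec q ≤ lamMax A * (q ⬝ᵥ q) := le_lamMax_mul A q
    rw [e1, e2] at hcs
    have h15 : (q ⬝ᵥ q) * (q ⬝ᵥ q) ≤ (lamMax A * γ) * (q ⬝ᵥ q) := by
      calc (q ⬝ᵥ q) * (q ⬝ᵥ q) = (q ⬝ᵥ q) ^ 2 := (sq _).symm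
        _ ≤ γ * (q ⬝ᵥ A.mulVec q) := hcs
        _ ≤ γ * (lamMax A * (q ⬝ᵥ q)) := mul_le_mul_of_nonneg_left e3 hγpos.le
        _ = (lamMax A * γ) * (q ⬝ᵥ q) := by ring
    exact le_of_mul_le_mul_right h15 hqq_pos
  have hnq : norR q = Real.sqrt (q ⬝ᵥ q) := rfl
  have hnq_le : norR q ≤ Real.sqrt (lamMax A) * Real.sqrt γ := by
    rw [hnq, ← Real.sqrt_mul hlmax_pos.le]
    exact Real.sqrt_le_sqrt hqq_le
  have hkey1 : Real.sqrt γ / (2 * Real.sqrt δ) * (lamMin A * (zs ⬝ᵥ zs)) ≤ g ⬝ᵥ (x - s) := by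
    have hQ := lamMin_mul_le A zs
    have hbcδ : b ⬝ᵥ c ≤ δ := by rw [hδ_def]; linarith only [hx]
    have hcoef : (0:ℝ) < Real.sqrt γ / (2 * Real.sqrt δ) := by positivity
    have h2t : Real.sqrt γ * (2 * t * (q ⬝ᵥ c)) = 2 * Real.sqrt δ * (q ⬝ᵥ c) := by
      rw [ht_def]
      field_simp
    have step2 : Real.sqrt γ / (2 * Real.sqrt δ) * (b ⬝ᵥ c + 2 * t * (q ⬝ᵥ c) + δ)
        ≤ q ⬝ᵥ c + Real.sqrt δ * Real.sqrt γ := by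
      rw [div_mul_eq_mul_div, div_le_iff₀ (by positivity : (0:ℝ) < 2 * Real.sqrt δ)]
      have lhs_eq : Real.sqrt γ * (b ⬝ᵥ c + 2 * t * (q ⬝ᵥ c) + δ)
          = Real.sqrt γ * (b ⬝ᵥ c) + 2 * Real.sqrt δ * (q ⬝ᵥ c) + Real.sqrt γ * δ := by
        linear_combination h2t
      rw [lhs_eq]
      have hδγ : Real.sqrt δ * Real.sqrt δ * Real.sqrt γ = δ * Real.sqrt γ := by rw [hsδ2]
      linarith only [mul_le_mul_of_nonneg_left hbcδ hsγ.le, hδγ]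
    calc Real.sqrt γ / (2 * Real.sqrt δ) * (lamMin A * (zs ⬝ᵥ zs))
        ≤ Real.sqrt γ / (2 * Real.sqrt δ) * (zs ⬝ᵥ A.mulVec zs) :=
          mul_le_mul_of_nonneg_left hQ hcoef.le
      _ = Real.sqrt γ / (2 * Real.sqrt δ) * (b ⬝ᵥ c + 2 * t * (q ⬝ᵥ c) + δ) := by rw [hzsA]
      _ ≤ q ⬝ᵥ c + Real.sqrt δ * Real.sqrt γ := step2
      _ = g ⬝ᵥ (x - s) := hgap.symm
  have hsplit : Real.sqrt (δ * lamMax A) = Real.sqrt δ * Real.sqrt (lamMax A) :=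
    Real.sqrt_mul hδpos.le _
  have hLpos : 0 < Real.sqrt (lamMax A) := Real.sqrt_pos.mpr hlmax_pos
  rw [hnormd, hsplit]
  refine le_trans ?_ hkey1
  rw [div_mul_eq_mul_div, div_mul_eq_mul_div, div_mul_eq_mul_div,
    div_le_div_iff₀ (by positivity) (by positivity)]
  have P1 := mul_le_mul_of_nonneg_left hnq_le (mul_nonneg hlmin_nonneg hNu)
  have P2 := mul_le_mul_of_nonneg_left P1 (by positivity : (0:ℝ) ≤ 2 * Real.sqrt δ)
  linarith only [P2]
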